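/- Let n ≥ 1, 1 ≤ m ≤ n, and m < s ≤ 2n, and let μ_{2n,m} be the unique U(n)-invariant Borel probability measure on G_h(2n,m). There exists a constant C = C(n,m,s) > 0 such that for every Borel set A ⊆ ℝ^{2n}, every x ∈ ℝ^{2n}, and every r > 0, the upper integral satisfies ∫* H^{s−m}[ (A \ B(x,r)) ∩ (V^⊥ + x) ] dμ_{2n,m}(V) ≤ C r^{−m} H^s(A \ B(x,r)). -/

import Mathlib

open MeasureTheory Module Metric Set
open scoped ENNReal NNReal Real

noncomputable section

/-- Euclidean space `ℝ^{2n}`. -/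
abbrev E (n : ℕ) : Type := EuclideanSpace ℝ (Fin (2 * n))

/-- The standard symplectic form `ω((x,y),(u,v)) = x·v − y·u` on `ℝ^{2n}`. -/
def symp (n : ℕ) (x y : E n) : ℝ :=
  ∑ i : Fin n, (x ⟨i.1, by have := i.2; omega⟩ * y ⟨i.1 + n, by have := i.2; omega⟩ -
    x ⟨i.1 + n, by have := i.2; omega⟩ * y ⟨i.1, by have := i.2; omega⟩)

/-- A linear subspace of `ℝ^{2n}` is isotropic if the symplectic form vanishes on it. -/
def IsIsotropic (n : ℕ) (V : Submodule ℝ (E n)) : Prop :=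
  ∀ v ∈ V, ∀ w ∈ V, symp n v w = 0

/-- The orthogonal projection onto a subspace, as a continuous linear endomorphism. -/
def projCLM (n : ℕ) (V : Submodule ℝ (E n)) : E n →L[ℝ] E n :=
  V.subtypeL.comp (V.orthogonalProjectionOnto)

/-- The isotropic Grassmannian `G_h(2n,m)`, realized as the set of orthogonal projection
operators onto `m`-dimensional isotropic subspaces, inside the continuous linear
endomorphisms of `ℝ^{2n}`.  For `P` in this set, the corresponding plane `V` is
`LinearMap.range P` and the orthogonal projection `P_V` is `P` itself. -/
def grass (n m : ℕ) : Set (E n →L[ℝ] E n) :=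
  {P | ∃ V : Submodule ℝ (E n), IsIsotropic n V ∧ finrank ℝ V = m ∧ P = projCLM n V}

/-- Membership in `U(n)`: a linear isometry of `ℝ^{2n}` preserving the symplectic form. -/
def IsUnitary (n : ℕ) (g : E n ≃ₗᵢ[ℝ] E n) : Prop :=
  ∀ x y, symp n (g x) (g y) = symp n x y

/-- The action of an isometry on projection operators: `P ↦ g ∘ P ∘ g⁻¹`. -/
def conjAct (n : ℕ) (g : E n ≃ₗᵢ[ℝ] E n) (P : E n →L[ℝ] E n) : E n →L[ℝ] E n :=
  (g.toLinearIsometry.toContinuousLinearMap.comp P).comp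
    g.symm.toLinearIsometry.toContinuousLinearMap

/-- `ν` is a `U(n)`-invariant Borel probability measure `μ_{2n,m}` on `G_h(2n,m)`:
a Borel measure on the space of operators giving full mass to the isotropic
Grassmannian and invariant under the conjugation action of the unitary group.
(Probability is imposed via an `IsProbabilityMeasure` instance.) -/
def IsGrassMeasure (n m : ℕ) (ν : Measure (E n →L[ℝ] E n)) : Prop :=
  ν (grass n m) = 1 ∧
    ∀ g : E n ≃ₗᵢ[ℝ] E n, IsUnitary n g → Measure.map (conjAct n g) ν = ν



open Filter
open scoped Topology RealInnerProductSpace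
set_option synthInstance.maxHeartbeats 1000000
set_option maxHeartbeats 2000000

namespace Aux

lemma projCLM_mem (n : ℕ) (V : Submodule ℝ (E n)) (x : E n) : projCLM n V x ∈ V :=
  (V.orthogonalProjectionOnto x).2

lemma projCLM_eq_self {n : ℕ} {V : Submodule ℝ (E n)} {v : E n} (h : v ∈ V) :
    projCLM n V v = v := by
  exact (Submodule.starProjection_eq_self_iff (K := V)).2 h

lemma projCLM_eq_zero {n : ℕ} {V : Submodule ℝ (E n)} {v : E n} (h : v ∈ Vᗮ) :
    projCLM n V v = 0 := by
  exact (Submodule.starProjection_apply_eq_zero_iff (K := V)).2 h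

lemma projCLM_symm (n : ℕ) (V : Submodule ℝ (E n)) (u v : E n) :
    ⟪projCLM n V u, v⟫ = ⟪u, projCLM n V v⟫ := by
  exact Submodule.inner_starProjection_left_eq_right (K := V) u v

lemma sub_projCLM_mem (n : ℕ) (V : Submodule ℝ (E n)) (x : E n) :
    x - projCLM n V x ∈ Vᗮ := by
  exact Submodule.sub_starProjection_mem_orthogonal (K := V) x

lemma range_projCLM (n : ℕ) (V : Submodule ℝ (E n)) :
    LinearMap.range (projCLM n V : E n →ₗ[ℝ] E n) = V := by
  apply le_antisymm
  · rintro x ⟨y, rfl⟩; exact projCLM_mem n V y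
  · intro v hv; exact ⟨v, projCLM_eq_self hv⟩

-- determinant of prodMap
lemma det_prodMap {M N : Type*} [AddCommGroup M] [Module ℝ M] [AddCommGroup N] [Module ℝ N]
    [FiniteDimensional ℝ M] [FiniteDimensional ℝ N] (f : M →ₗ[ℝ] M) (g : N →ₗ[ℝ] N) :
    LinearMap.det (LinearMap.prodMap f g) = LinearMap.det f * LinearMap.det g := by
  classical
  let b₁ := Module.finBasis ℝ M
  let b₂ := Module.finBasis ℝ N
  rw [← LinearMap.det_toMatrix (b₁.prod b₂), LinearMap.toMatrix_prodMap b₁ b₂ f g,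
    Matrix.det_fromBlocks_zero₁₂, LinearMap.det_toMatrix, LinearMap.det_toMatrix]

lemma trace_projCLM (n : ℕ) (V : Submodule ℝ (E n)) :
    LinearMap.trace ℝ (E n) (projCLM n V).toLinearMap = finrank ℝ V := by
  classical
  have hc : IsCompl V Vᗮ := Submodule.isCompl_orthogonal_of_hasOrthogonalProjection
  let e := Submodule.prodEquivOfIsCompl V Vᗮ hc
  have key : (projCLM n V).toLinearMap = e.conj (LinearMap.prodMap (LinearMap.id) 0) := by
    apply LinearMap.ext
    intro x
    have hx : x = e (e.symm x) := (e.apply_symm_apply x).symm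
    obtain ⟨p, hp⟩ : ∃ p : V × Vᗮ, x = e p := ⟨e.symm x, hx⟩
    subst hp
    have he : e p = (p.1 : E n) + (p.2 : E n) := rfl
    have : projCLM n V ((p.1 : E n) + (p.2 : E n)) = (p.1 : E n) := by
      rw [map_add, projCLM_eq_self p.1.2, projCLM_eq_zero p.2.2, add_zero]
    simp only [he, this, LinearEquiv.conj_apply, LinearMap.comp_apply,
      LinearEquiv.coe_coe, LinearEquiv.symm_apply_apply]
    have hpm : (LinearMap.prodMap (LinearMap.id (R := ℝ) (M := V)) (0 : Vᗮ →ₗ[ℝ] Vᗮ)) p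
        = (p.1, 0) := by simp
    have h2 : e.symm ((p.1 : E n) + (p.2 : E n)) = p := by
      rw [← he]; exact e.symm_apply_apply p
    have h3 : e (p.1, (0 : Vᗮ)) = (p.1 : E n) := by
      show ((p.1 : E n) + ((0 : Vᗮ) : E n)) = p.1; simp
    rw [h2, hpm, h3]; exact this
  rw [key, LinearMap.trace_conj', LinearMap.trace_prodMap', LinearMap.trace_id, map_zero,
    add_zero]

lemma continuous_symp (n : ℕ) : Continuous fun p : E n × E n => symp n p.1 p.2 := by
  unfold symp
  refine continuous_finset_sum _ fun i _ => Continuous.sub (Continuous.mul ?_ ?_)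
    (Continuous.mul ?_ ?_) <;>
  · first
    | exact (EuclideanSpace.proj _).continuous.comp continuous_fst
    | exact (EuclideanSpace.proj _).continuous.comp continuous_snd

lemma grass_eq (n m : ℕ) : grass n m =
    {P : E n →L[ℝ] E n | (∀ x, P (P x) = P x) ∧ (∀ u v, ⟪P u, v⟫ = ⟪u, P v⟫) ∧
      LinearMap.trace ℝ (E n) P.toLinearMap = (m : ℝ) ∧
      (∀ u v, symp n (P u) (P v) = 0)} := by
  ext P
  constructor
  · rintro ⟨V, hiso, hrank, rfl⟩
    refine ⟨fun x => projCLM_eq_self (projCLM_mem n V x), projCLM_symm n V, ?_, ?_⟩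
    · rw [trace_projCLM, hrank]
    · intro u v
      exact hiso _ (projCLM_mem n V u) _ (projCLM_mem n V v)
  · rintro ⟨h1, h2, h3, h4⟩
    set V : Submodule ℝ (E n) := LinearMap.range (P : E n →ₗ[ℝ] E n) with hV
    have hPproj : P = projCLM n V := by
      ext x
      have hmem : P x ∈ V := ⟨x, rfl⟩
      have horth : ∀ w ∈ V, ⟪x - P x, w⟫ = 0 := by
        rintro w ⟨y, rfl⟩
        show ⟪x - P x, P y⟫ = 0
        rw [← h2, map_sub, h1, sub_self, inner_zero_left]
      have := Submodule.eq_starProjection_of_mem_of_inner_eq_zero (u := x) hmem horth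
      simp only [projCLM, ContinuousLinearMap.comp_apply, Submodule.subtypeL_apply]
      exact congrFun (congrArg WithLp.ofLp this.symm) _
    have hrk : finrank ℝ V = m := by
      have h5 := trace_projCLM n V
      rw [← hPproj, h3] at h5
      exact_mod_cast h5.symm
    refine ⟨V, ?_, hrk, hPproj⟩
    rintro v ⟨a, rfl⟩ w ⟨b, rfl⟩
    exact h4 a b

lemma isClosed_grass (n m : ℕ) : IsClosed (grass n m) := by
  rw [grass_eq]
  have happ : ∀ x : E n, Continuous fun P : E n →L[ℝ] E n => P x := fun x =>
    (ContinuousLinearMap.apply ℝ (E n) x).continuous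
  simp only [setOf_and, setOf_forall]
  refine IsClosed.inter ?_ (IsClosed.inter ?_ (IsClosed.inter ?_ ?_))
  · exact isClosed_iInter fun x => isClosed_eq (continuous_id.clm_apply (happ x)) (happ x)
  · exact isClosed_iInter fun u => isClosed_iInter fun v =>
      isClosed_eq ((happ u).inner continuous_const) (continuous_const.inner (happ v))
  · have : Continuous fun P : E n →L[ℝ] E n => LinearMap.trace ℝ (E n) P.toLinearMap :=
      LinearMap.continuous_of_finiteDimensional
        ((LinearMap.trace ℝ (E n)).comp (ContinuousLinearMap.coeLM ℝ))
    exact isClosed_eq this continuous_const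
  · exact isClosed_iInter fun u => isClosed_iInter fun v =>
      isClosed_eq ((continuous_symp n).comp ((happ u).prodMk (happ v))) continuous_const

lemma measurableSet_grass (n m : ℕ) : MeasurableSet (grass n m) :=
  (isClosed_grass n m).measurableSet

abbrev F (n : ℕ) : Type := EuclideanSpace ℂ (Fin n)

def idx1 (n : ℕ) (j : Fin n) : Fin (2 * n) := ⟨j.1, by have := j.2; omega⟩
def idx2 (n : ℕ) (j : Fin n) : Fin (2 * n) := ⟨j.1 + n, by have := j.2; omega⟩

def ψlin (n : ℕ) : E n ≃ₗ[ℝ] F n where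
  toFun x := WithLp.toLp 2 (fun j : Fin n => (⟨x (idx1 n j), x (idx2 n j)⟩ : ℂ))
  invFun u := WithLp.toLp 2 (fun i : Fin (2 * n) => if h : i.1 < n then (u ⟨i.1, h⟩).re else (u ⟨i.1 - n, by have := i.2; omega⟩).im)
  map_add' x y := by
    ext j
    apply Complex.ext <;> simp [Complex.add_re, Complex.add_im]
  map_smul' c x := by
    ext j
    apply Complex.ext <;> simp [Complex.real_smul]
  left_inv x := by
    refine PiLp.ext (p := 2) fun i => ?_
    by_cases h : i.1 < n
    · simp only [WithLp.ofLp_toLp, dif_pos h]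
      rfl
    · simp only [WithLp.ofLp_toLp, dif_neg h]
      show x (idx2 n ⟨i.1 - n, by have := i.2; omega⟩) = x i
      refine congrArg x.ofLp (Fin.ext ?_)
      simp [idx2]
      omega
  right_inv u := by
    refine PiLp.ext (p := 2) fun j => ?_
    apply Complex.ext
    · have h : (idx1 n j).1 < n := j.2
      simp only [WithLp.ofLp_toLp, dif_pos h]
      rfl
    · have h : ¬ (idx2 n j).1 < n := by simp [idx2]
      simp only [WithLp.ofLp_toLp, dif_neg h]
      show (u ⟨(idx2 n j).1 - n, _⟩).im = _
      refine congrArg (fun k => (u k).im) (Fin.ext ?_)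
      simp [idx2]

lemma ψlin_norm (n : ℕ) (x : E n) : ‖ψlin n x‖ = ‖x‖ := by
  rw [EuclideanSpace.norm_eq, EuclideanSpace.norm_eq]
  congr 1
  have : ∀ j : Fin n, ‖ψlin n x j‖ ^ 2 = ‖x (idx1 n j)‖ ^ 2 + ‖x (idx2 n j)‖ ^ 2 := by
    intro j
    rw [Complex.sq_norm]
    show Complex.normSq ⟨x (idx1 n j), x (idx2 n j)⟩ = _
    simp [Complex.normSq, sq, Real.norm_eq_abs, abs_mul_abs_self]
  calc ∑ j : Fin n, ‖ψlin n x j‖ ^ 2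
      = ∑ j : Fin n, (‖x (idx1 n j)‖ ^ 2 + ‖x (idx2 n j)‖ ^ 2) := by
        exact Finset.sum_congr rfl fun j _ => this j
    _ = ∑ i : Fin (2 * n), ‖x i‖ ^ 2 := by
        rw [Finset.sum_add_distrib]
        have hs := Fintype.sum_equiv (finCongr (two_mul n)) (fun i : Fin (2*n) => ‖x i‖^2)
          (fun k : Fin (n+n) => ‖x (finCongr (two_mul n).symm k)‖^2)
          (fun i => by simp)
        rw [hs, Fin.sum_univ_add]
        have h1 : ∀ j : Fin n, (finCongr (two_mul n).symm) (Fin.castAdd n j) = idx1 n j := by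
          intro j; ext
          simp only [idx1, finCongr_apply, Fin.coe_cast, Fin.coe_castAdd]
        have h2 : ∀ j : Fin n, (finCongr (two_mul n).symm) (Fin.natAdd n j) = idx2 n j := by
          intro j; ext
          simp only [idx2, finCongr_apply, Fin.coe_cast, Fin.coe_natAdd]
          omega
        refine congrArg₂ (· + ·) ?_ ?_
        · exact Finset.sum_congr rfl fun j _ => by rw [h1]
        · exact Finset.sum_congr rfl fun j _ => by rw [h2]

def ψ (n : ℕ) : E n ≃ₗᵢ[ℝ] F n := ⟨ψlin n, ψlin_norm n⟩

lemma symp_eq (n : ℕ) (x y : E n) :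
    symp n x y = (inner (𝕜 := ℂ) (ψ n x) (ψ n y)).im := by
  rw [PiLp.inner_apply]
  rw [Complex.im_sum]
  unfold symp
  apply Finset.sum_congr rfl
  intro j _
  rw [RCLike.inner_apply]
  show _ = ((⟨y (idx1 n j), y (idx2 n j)⟩ : ℂ) * (starRingEnd ℂ) ⟨x (idx1 n j), x (idx2 n j)⟩).im
  simp [Complex.mul_im, Complex.conj_re, Complex.conj_im, idx1, idx2]
  ring

def realU {n : ℕ} (U : F n ≃ₗᵢ[ℂ] F n) : F n ≃ₗᵢ[ℝ] F n :=
  ⟨U.toLinearEquiv.restrictScalars ℝ, U.norm_map⟩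

def toRealIso {n : ℕ} (U : F n ≃ₗᵢ[ℂ] F n) : E n ≃ₗᵢ[ℝ] E n :=
  ((ψ n).trans (realU U)).trans (ψ n).symm

lemma toRealIso_apply {n : ℕ} (U : F n ≃ₗᵢ[ℂ] F n) (x : E n) :
    toRealIso U x = (ψ n).symm (U (ψ n x)) := rfl

lemma toRealIso_unitary {n : ℕ} (U : F n ≃ₗᵢ[ℂ] F n) : IsUnitary n (toRealIso U) := by
  intro x y
  rw [symp_eq, symp_eq, toRealIso_apply, toRealIso_apply,
    (ψ n).apply_symm_apply, (ψ n).apply_symm_apply, U.inner_map_map]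

lemma exists_unitary {n : ℕ} (hn : 1 ≤ n) (z z' : E n) (hz : z ≠ 0) (hnorm : ‖z‖ = ‖z'‖) :
    ∃ g : E n ≃ₗᵢ[ℝ] E n, IsUnitary n g ∧ g z = z' := by
  classical
  have hz' : z' ≠ 0 := by
    intro h; apply hz
    rw [h, norm_zero] at hnorm
    exact norm_eq_zero.1 hnorm
  have hznorm : ‖z‖ ≠ 0 := norm_ne_zero_iff.2 hz
  set u : F n := ψ n (‖z‖⁻¹ • z) with hu
  set u' : F n := ψ n (‖z'‖⁻¹ • z') with hu'
  have hun : ‖u‖ = 1 := by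
    rw [hu, (ψ n).norm_map, norm_smul, norm_inv, norm_norm, inv_mul_cancel₀ hznorm]
  have hun' : ‖u'‖ = 1 := by
    rw [hu', (ψ n).norm_map, norm_smul, norm_inv, norm_norm,
      inv_mul_cancel₀ (norm_ne_zero_iff.2 hz')]
  set i0 : Fin n := ⟨0, hn⟩
  have hcard : finrank ℂ (F n) = Fintype.card (Fin n) := by simp
  have horth : ∀ w : F n, ‖w‖ = 1 →
      Orthonormal ℂ (Set.restrict {i0} (fun _ : Fin n => w)) := by
    intro w hw
    rw [orthonormal_iff_ite]
    intro i j
    have hij : i = j := by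
      apply Subtype.ext
      have h1 : i.1 ∈ ({i0} : Set (Fin n)) := i.2
      have h2 : j.1 ∈ ({i0} : Set (Fin n)) := j.2
      rw [Set.mem_singleton_iff] at h1 h2
      rw [h1, h2]
    subst hij
    simp only [if_pos rfl, Set.restrict_apply]
    rw [inner_self_eq_norm_sq_to_K, show ‖({i0} : Set (Fin n)).restrict (fun _ => w) i‖ = 1 from hw]
    norm_num
  obtain ⟨b, hb⟩ := (horth u hun).exists_orthonormalBasis_extension_of_card_eq hcard
  obtain ⟨b', hb'⟩ := (horth u' hun').exists_orthonormalBasis_extension_of_card_eq hcard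
  set U : F n ≃ₗᵢ[ℂ] F n := b.repr.trans b'.repr.symm with hU
  have hUu : U u = u' := by
    rw [hU, ← hb i0 rfl, ← hb' i0 rfl]
    simp [OrthonormalBasis.repr_self, OrthonormalBasis.repr_symm_single]
  refine ⟨toRealIso U, toRealIso_unitary U, ?_⟩
  have hsmul : U (‖z‖ • u) = ‖z‖ • u' := by
    rw [← hUu]
    exact U.toLinearEquiv.map_smul_of_tower ‖z‖ u
  have hψz : ψ n z = ‖z‖ • u := by
    rw [hu, ← (ψ n).map_smul, smul_inv_smul₀ hznorm]
  rw [toRealIso_apply, hψz, hsmul, hnorm, ← (ψ n).map_smul]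
  rw [(ψ n).symm_apply_apply]
  exact smul_inv_smul₀ (norm_ne_zero_iff.2 hz') z'

lemma finrank_E (n : ℕ) : finrank ℝ (E n) = 2 * n := by simp

lemma norm_sub_projCLM_le (n : ℕ) (V : Submodule ℝ (E n)) (z : E n) :
    ‖z - projCLM n V z‖ ≤ ‖z‖ := by
  have horth : ⟪projCLM n V z, z - projCLM n V z⟫ = 0 :=
    Submodule.inner_right_of_mem_orthogonal (projCLM_mem n V z) (sub_projCLM_mem n V z)
  have hz : ‖z‖ ^ 2 = ‖projCLM n V z‖ ^ 2 + ‖z - projCLM n V z‖ ^ 2 := by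
    have := norm_add_sq_real (projCLM n V z) (z - projCLM n V z)
    rw [horth] at this
    simpa [add_sub_cancel] using this
  refine le_of_pow_le_pow_left₀ two_ne_zero (norm_nonneg _) ?_
  rw [hz]
  nlinarith [sq_nonneg ‖projCLM n V z‖]

/-- The slab volume estimate. -/
lemma slab_volume (n m : ℕ) (V : Submodule ℝ (E n)) (hV : finrank ℝ V = m)
    {t : ℝ} (ht0 : 0 < t) (ht1 : t ≤ 1) :
    volume {z : E n | z ∈ ball (0 : E n) 1 ∧ ‖projCLM n V z‖ ≤ t} ≤
      ENNReal.ofReal (t ^ m) * volume (ball (0 : E n) 2) := by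
  classical
  set P : E n →L[ℝ] E n := projCLM n V with hP
  set T : E n →ₗ[ℝ] E n := t • (P : E n →ₗ[ℝ] E n) + (LinearMap.id - (P : E n →ₗ[ℝ] E n))
    with hT
  have hTapp : ∀ z, T z = t • P z + (z - P z) := fun z => rfl
  -- determinant of T
  have hc : IsCompl V Vᗮ := Submodule.isCompl_orthogonal_of_hasOrthogonalProjection
  have hdet : LinearMap.det T = t ^ m := by
    set e := Submodule.prodEquivOfIsCompl V Vᗮ hc with he
    have key : T = (e : (V × Vᗮ) →ₗ[ℝ] E n) ∘ₗ
        (LinearMap.prodMap (t • LinearMap.id) LinearMap.id) ∘ₗ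
        (e.symm : E n →ₗ[ℝ] (V × Vᗮ)) := by
      apply LinearMap.ext
      intro x
      obtain ⟨p, rfl⟩ : ∃ p : V × Vᗮ, x = e p := ⟨e.symm x, (e.apply_symm_apply x).symm⟩
      have he1 : e p = (p.1 : E n) + (p.2 : E n) := rfl
      have hP1 : P ((p.1 : E n) + (p.2 : E n)) = (p.1 : E n) := by
        rw [map_add, projCLM_eq_self p.1.2, projCLM_eq_zero p.2.2, add_zero]
      simp only [LinearMap.comp_apply, LinearEquiv.coe_coe, LinearEquiv.symm_apply_apply]
      rw [hTapp, he1, hP1]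
      have : (LinearMap.prodMap (t • LinearMap.id (R := ℝ) (M := V))
          (LinearMap.id (R := ℝ) (M := Vᗮ))) p = (t • p.1, p.2) := by simp
      rw [this]
      show t • (p.1 : E n) + ((p.1 : E n) + (p.2 : E n) - (p.1 : E n))
        = ((t • p.1 : V) : E n) + (p.2 : E n)
      push_cast
      abel
    rw [key, LinearMap.det_conj, det_prodMap, LinearMap.det_smul, LinearMap.det_id,
      LinearMap.det_id, hV]
    ring
  -- inclusion into image
  have hsub : {z : E n | z ∈ ball (0 : E n) 1 ∧ ‖P z‖ ≤ t} ⊆ T '' ball (0 : E n) 2 := by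
    rintro z ⟨hz1, hz2⟩
    refine ⟨t⁻¹ • P z + (z - P z), ?_, ?_⟩
    · rw [mem_ball, dist_zero_right]
      have h1 : ‖t⁻¹ • P z‖ ≤ 1 := by
        rw [norm_smul, norm_inv, Real.norm_eq_abs, abs_of_pos ht0]
        calc t⁻¹ * ‖P z‖ ≤ t⁻¹ * t := by
              apply mul_le_mul_of_nonneg_left hz2 (le_of_lt (inv_pos.2 ht0))
          _ = 1 := inv_mul_cancel₀ (ne_of_gt ht0)
      have h2 : ‖z - P z‖ ≤ ‖z‖ := norm_sub_projCLM_le n V z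
      have h3 : ‖z‖ < 1 := by rwa [mem_ball, dist_zero_right] at hz1
      calc ‖t⁻¹ • P z + (z - P z)‖ ≤ ‖t⁻¹ • P z‖ + ‖z - P z‖ := norm_add_le _ _
        _ < 1 + 1 := by linarith
        _ = 2 := by norm_num
    · rw [hTapp]
      have hPP : P (P z) = P z := projCLM_eq_self (projCLM_mem n V z)
      have hP0 : P (z - P z) = 0 := projCLM_eq_zero (sub_projCLM_mem n V z)
      rw [map_add, map_sub, _root_.map_smul, hPP]
      simp only [sub_self, add_zero]
      rw [smul_smul, mul_inv_cancel₀ (ne_of_gt ht0), one_smul]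
      abel
  calc volume {z : E n | z ∈ ball (0 : E n) 1 ∧ ‖P z‖ ≤ t}
      ≤ volume (T '' ball (0 : E n) 2) := measure_mono hsub
    _ = ENNReal.ofReal |LinearMap.det T| * volume (ball (0 : E n) 2) :=
        Measure.addHaar_image_linearMap volume T _
    _ = ENNReal.ofReal (t ^ m) * volume (ball (0 : E n) 2) := by
        rw [hdet, abs_of_pos (pow_pos ht0 m)]

lemma continuous_conjAct (n : ℕ) (g : E n ≃ₗᵢ[ℝ] E n) : Continuous (conjAct n g) := by
  have c1 : Continuous fun P : E n →L[ℝ] E n =>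
      g.toLinearIsometry.toContinuousLinearMap.comp P :=
    (ContinuousLinearMap.compL ℝ (E n) (E n) (E n)
      g.toLinearIsometry.toContinuousLinearMap).continuous
  have c2 : Continuous fun Q : E n →L[ℝ] E n =>
      Q.comp g.symm.toLinearIsometry.toContinuousLinearMap :=
    ((ContinuousLinearMap.compL ℝ (E n) (E n) (E n)).flip
      g.symm.toLinearIsometry.toContinuousLinearMap).continuous
  exact c2.comp c1

lemma measurableSet_tube (n : ℕ) (z : E n) (a : ℝ) :
    MeasurableSet {P : E n →L[ℝ] E n | ‖P z‖ ≤ a} := by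
  have : IsClosed {P : E n →L[ℝ] E n | ‖P z‖ ≤ a} :=
    isClosed_le (continuous_norm.comp ((ContinuousLinearMap.apply ℝ (E n) z).continuous))
      continuous_const
  exact this.measurableSet

/-- Constancy of the tube measure over nonzero directions. -/
lemma tube_const {n m : ℕ} (hn : 1 ≤ n) {ν : Measure (E n →L[ℝ] E n)}
    (hν : IsGrassMeasure n m ν) {t : ℝ} (ht : 0 ≤ t) {z z' : E n} (hz : z ≠ 0) (hz' : z' ≠ 0) :
    ν {P | ‖P z‖ ≤ t * ‖z‖} = ν {P | ‖P z'‖ ≤ t * ‖z'‖} := by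
  -- reduce to unit vectors
  have scale : ∀ w : E n, w ≠ 0 →
      {P : E n →L[ℝ] E n | ‖P w‖ ≤ t * ‖w‖} = {P | ‖P (‖w‖⁻¹ • w)‖ ≤ t * ‖(‖w‖⁻¹ • w)‖} := by
    intro w hw
    have hnw : (0:ℝ) < ‖w‖ := norm_pos_iff.2 hw
    ext P
    simp only [mem_setOf_eq, _root_.map_smul, norm_smul, norm_inv, norm_norm,
      inv_mul_cancel₀ (ne_of_gt hnw), mul_one]
    rw [inv_mul_le_iff₀ hnw, mul_comm ‖w‖ t]
  rw [scale z hz, scale z' hz']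
  set u := ‖z‖⁻¹ • z with huu
  set u' := ‖z'‖⁻¹ • z' with huu'
  have hu : u ≠ 0 := smul_ne_zero (inv_ne_zero (norm_ne_zero_iff.2 hz)) hz
  have hu' : u' ≠ 0 := smul_ne_zero (inv_ne_zero (norm_ne_zero_iff.2 hz')) hz'
  have hnu : ‖u‖ = 1 := by
    rw [huu, norm_smul, norm_inv, norm_norm, inv_mul_cancel₀ (norm_ne_zero_iff.2 hz)]
  have hnu' : ‖u'‖ = 1 := by
    rw [huu', norm_smul, norm_inv, norm_norm, inv_mul_cancel₀ (norm_ne_zero_iff.2 hz')]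
  obtain ⟨g, hg, hgz⟩ := exists_unitary hn u u' hu (by rw [hnu, hnu'])
  have hmap := hν.2 g hg
  have hmeas : MeasurableSet {P : E n →L[ℝ] E n | ‖P u'‖ ≤ t * ‖u'‖} := measurableSet_tube n u' _
  have : ν {P | ‖P u'‖ ≤ t * ‖u'‖} = ν (conjAct n g ⁻¹' {P | ‖P u'‖ ≤ t * ‖u'‖}) := by
    conv_lhs => rw [← hmap]
    exact Measure.map_apply (continuous_conjAct n g).measurable hmeas
  rw [this]
  congr 1
  ext P
  simp only [mem_preimage, mem_setOf_eq, conjAct, ContinuousLinearMap.comp_apply,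
    LinearIsometry.coe_toContinuousLinearMap, LinearIsometryEquiv.coe_toLinearIsometry]
  rw [g.norm_map]
  have : g.symm u' = u := by rw [← hgz, g.symm_apply_apply]
  rw [this, hnu, hnu']

/-- The key small-ball estimate for an invariant measure on the Grassmannian. -/
lemma small_ball {n m : ℕ} (hn : 1 ≤ n) (hm : 1 ≤ m) {ν : Measure (E n →L[ℝ] E n)}
    [IsProbabilityMeasure ν] (hν : IsGrassMeasure n m ν) {z : E n} (hz : z ≠ 0)
    {t : ℝ} (ht : 0 ≤ t) :
    ν {P | ‖P z‖ ≤ t * ‖z‖} ≤ ENNReal.ofReal ((2:ℝ) ^ (2*n) * t ^ m) := by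
  haveI : Nontrivial (E n) := nontrivial_of_finrank_pos
    (by rw [finrank_E]; omega : 0 < finrank ℝ (E n))
  -- main case 0 < t < 1
  have main : ∀ t' : ℝ, 0 < t' → t' ≤ 1 →
      ν {P | ‖P z‖ ≤ t' * ‖z‖} ≤ ENNReal.ofReal ((2:ℝ) ^ (2*n) * t' ^ m) := by
    intro t' ht0' ht1'
    set B1 : Set (E n) := ball 0 1 with hB1
    set μB := volume.restrict B1 with hμB
    set S : Set ((E n →L[ℝ] E n) × E n) := {p | ‖p.1 p.2‖ ≤ t' * ‖p.2‖} with hS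
    have hSm : MeasurableSet S := by
      have : IsClosed S := isClosed_le
        (continuous_norm.comp (continuous_fst.clm_apply continuous_snd))
        (continuous_const.mul (continuous_norm.comp continuous_snd))
      exact this.measurableSet
    have way1 : (ν.prod μB) S = ν {P | ‖P z‖ ≤ t' * ‖z‖} * volume B1 := by
      rw [Measure.prod_apply_symm hSm]
      have : ∀ᵐ w ∂μB, ν ((fun P => (P, w)) ⁻¹' S) = ν {P | ‖P z‖ ≤ t' * ‖z‖} := by
        have h0 : ∀ᵐ w ∂μB, w ≠ 0 := by
          rw [hμB, ae_restrict_iff' measurableSet_ball]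
          have : volume ({(0:E n)}) = 0 := measure_singleton 0
          filter_upwards [measure_eq_zero_iff_ae_notMem.1 this] with w hw _
          exact fun hc => hw (by rw [hc]; exact rfl)
        filter_upwards [h0] with w hw
        have : (fun P : E n →L[ℝ] E n => (P, w)) ⁻¹' S = {P | ‖P w‖ ≤ t' * ‖w‖} := rfl
        rw [this]
        exact tube_const hn hν (le_of_lt ht0') hw hz
      rw [lintegral_congr_ae this, lintegral_const, hμB, Measure.restrict_apply_univ]
    have way2 : (ν.prod μB) S ≤
        ENNReal.ofReal (t' ^ m) * volume (ball (0:E n) 2) := by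
      rw [Measure.prod_apply hSm]
      have hbound : ∀ᵐ P ∂ν, μB (Prod.mk P ⁻¹' S) ≤
          ENNReal.ofReal (t' ^ m) * volume (ball (0:E n) 2) := by
        have hgrass : ∀ᵐ P ∂ν, P ∈ grass n m := by
          have h1 : ν (grass n m)ᶜ = 0 := by
            have := measure_compl (measurableSet_grass n m) (measure_ne_top ν _)
            rw [hν.1, measure_univ] at this
            simpa using this
          exact (measure_eq_zero_iff_ae_notMem.1 h1).mono fun P hP => by simpa using hP
        filter_upwards [hgrass] with P hP
        obtain ⟨V, hiso, hrank, rfl⟩ := hP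
        have hsub : Prod.mk (projCLM n V) ⁻¹' S ∩ B1 ⊆
            {w : E n | w ∈ ball (0 : E n) 1 ∧ ‖projCLM n V w‖ ≤ t'} := by
          rintro w ⟨hw1, hw2⟩
          refine ⟨hw2, ?_⟩
          have hwn : ‖w‖ < 1 := by rwa [mem_ball, dist_zero_right] at hw2
          calc ‖projCLM n V w‖ ≤ t' * ‖w‖ := hw1
            _ ≤ t' * 1 := mul_le_mul_of_nonneg_left (le_of_lt hwn) (le_of_lt ht0')
            _ = t' := mul_one t'
        calc μB (Prod.mk (projCLM n V) ⁻¹' S)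
            = volume (Prod.mk (projCLM n V) ⁻¹' S ∩ B1) := by
              rw [hμB, Measure.restrict_apply (hSm.preimage measurable_prodMk_left)]
          _ ≤ volume {w : E n | w ∈ ball (0 : E n) 1 ∧ ‖projCLM n V w‖ ≤ t'} :=
              measure_mono hsub
          _ ≤ ENNReal.ofReal (t' ^ m) * volume (ball (0 : E n) 2) :=
              slab_volume n m V hrank ht0' ht1'
      calc ∫⁻ P, μB (Prod.mk P ⁻¹' S) ∂ν
          ≤ ∫⁻ _, ENNReal.ofReal (t' ^ m) * volume (ball (0:E n) 2) ∂ν :=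
            lintegral_mono_ae hbound
        _ = ENNReal.ofReal (t' ^ m) * volume (ball (0:E n) 2) := by
            rw [lintegral_const, measure_univ, mul_one]
    have hball2 : volume (ball (0:E n) 2) = ENNReal.ofReal ((2:ℝ)^(2*n)) * volume B1 := by
      rw [hB1, Measure.addHaar_ball volume (0:E n) (by norm_num : (0:ℝ) ≤ 2), finrank_E]
    have hcomb : ν {P | ‖P z‖ ≤ t' * ‖z‖} * volume B1 ≤
        (ENNReal.ofReal (t' ^ m) * ENNReal.ofReal ((2:ℝ)^(2*n))) * volume B1 := by
      rw [← way1]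
      calc (ν.prod μB) S ≤ ENNReal.ofReal (t' ^ m) * volume (ball (0:E n) 2) := way2
        _ = (ENNReal.ofReal (t' ^ m) * ENNReal.ofReal ((2:ℝ)^(2*n))) * volume B1 := by
            rw [hball2]; ring
    have hvol0 : volume B1 ≠ 0 := (measure_ball_pos volume (0:E n) one_pos).ne'
    have hvolt : volume B1 ≠ ⊤ := measure_ball_lt_top.ne
    have := (ENNReal.mul_le_mul_iff_left hvol0 hvolt).1 hcomb
    calc ν {P | ‖P z‖ ≤ t' * ‖z‖}
        ≤ ENNReal.ofReal (t' ^ m) * ENNReal.ofReal ((2:ℝ)^(2*n)) := this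
      _ = ENNReal.ofReal ((2:ℝ)^(2*n) * t' ^ m) := by
          rw [← ENNReal.ofReal_mul (by positivity), mul_comm]
  rcases le_or_gt t 1 with ht1 | ht1
  · rcases eq_or_lt_of_le ht with ht0 | ht0
    · -- t = 0
      have key : ∀ ε : ℝ, 0 < ε → ε ≤ 1 → ν {P | ‖P z‖ ≤ t * ‖z‖} ≤
          ENNReal.ofReal ((2:ℝ)^(2*n) * ε ^ m) := by
        intro ε hε hε1
        refine le_trans (measure_mono ?_) (main ε hε hε1)
        intro P hP
        simp only [mem_setOf_eq] at *
        calc ‖P z‖ ≤ t * ‖z‖ := hP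
          _ ≤ ε * ‖z‖ := by
              apply mul_le_mul_of_nonneg_right _ (norm_nonneg z)
              rw [← ht0]; exact le_of_lt hε
      have hz0 : ν {P | ‖P z‖ ≤ t * ‖z‖} = 0 := by
        refine le_antisymm ?_ zero_le
        refine ENNReal.le_of_forall_pos_le_add fun ε hε _ => ?_
        rw [zero_add]
        have h2n : (0:ℝ) < (2:ℝ)^(2*n) := by positivity
        set εr : ℝ := min 1 ((ε : ℝ) / (2:ℝ)^(2*n)) with hεr
        have hεr0 : 0 < εr := lt_min one_pos (by positivity)
        have hεr1 : εr ≤ 1 := min_le_left _ _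
        refine le_trans (key εr hεr0 hεr1) ?_
        have hpow : εr ^ m ≤ εr := pow_le_of_le_one (le_of_lt hεr0) hεr1 (by omega)
        have hle : (2:ℝ)^(2*n) * εr ^ m ≤ ε := by
          calc (2:ℝ)^(2*n) * εr ^ m ≤ (2:ℝ)^(2*n) * εr := by nlinarith
            _ ≤ (2:ℝ)^(2*n) * ((ε:ℝ) / (2:ℝ)^(2*n)) :=
                mul_le_mul_of_nonneg_left (min_le_right _ _) (le_of_lt h2n)
            _ = ε := by field_simp
        calc ENNReal.ofReal ((2:ℝ)^(2*n) * εr^m) ≤ ENNReal.ofReal ε :=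
              ENNReal.ofReal_le_ofReal hle
          _ = (ε : ℝ≥0∞) := ENNReal.ofReal_coe_nnreal
      rw [hz0]; exact zero_le
    · exact main t ht0 ht1
  · -- t > 1
    calc ν {P | ‖P z‖ ≤ t * ‖z‖} ≤ 1 := prob_le_one
      _ ≤ ENNReal.ofReal ((2:ℝ)^(2*n) * t ^ m) := by
          rw [ENNReal.one_le_ofReal]
          have h1 : (1:ℝ) ≤ (2:ℝ)^(2*n) := one_le_pow₀ (by norm_num)
          have h2 : (1:ℝ) ≤ t ^ m := one_le_pow₀ (le_of_lt ht1)
          nlinarith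

lemma norm_projCLM_le (n : ℕ) (V : Submodule ℝ (E n)) (z : E n) :
    ‖projCLM n V z‖ ≤ ‖z‖ := by
  have horth : ⟪projCLM n V z, z - projCLM n V z⟫ = 0 :=
    Submodule.inner_right_of_mem_orthogonal (projCLM_mem n V z) (sub_projCLM_mem n V z)
  have hz : ‖z‖ ^ 2 = ‖projCLM n V z‖ ^ 2 + ‖z - projCLM n V z‖ ^ 2 := by
    have := norm_add_sq_real (projCLM n V z) (z - projCLM n V z)
    rw [horth] at this
    simpa [add_sub_cancel] using this
  refine le_of_pow_le_pow_left₀ two_ne_zero (norm_nonneg _) ?_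
  rw [hz]
  nlinarith [sq_nonneg ‖z - projCLM n V z‖]

end Aux

open Aux

/-- There is a constant `C = C(n,m,s) > 0` such that for every Borel set `A ⊆ ℝ^{2n}`,
every `x` and every `r > 0`,
`∫ H^{s−m}[(A \ B(x,r)) ∩ (V^⊥ + x)] dμ_{2n,m}(V) ≤ C r^{−m} H^s(A \ B(x,r))`. -/
theorem stmt9 (n m : ℕ) (hn : 1 ≤ n) (hm : 1 ≤ m) (hmn : m ≤ n)
    (s : ℝ) (hs1 : (m : ℝ) < s) (hs2 : s ≤ 2 * n)
    (ν : Measure (E n →L[ℝ] E n)) [IsProbabilityMeasure ν] (hν : IsGrassMeasure n m ν) :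
    ∃ C : ℝ, 0 < C ∧ ∀ A : Set (E n), MeasurableSet A → ∀ x : E n, ∀ r : ℝ, 0 < r →
      ∫⁻ P in grass n m,
          μH[s - m] ((A \ closedBall x r) ∩ {y : E n | y - x ∈ (LinearMap.range (P : E n →ₗ[ℝ] E n))ᗮ}) ∂ν
        ≤ ENNReal.ofReal (C / r ^ m) * μH[s] (A \ closedBall x r) := by
  classical
  refine ⟨(2:ℝ)^(2*n), by positivity, ?_⟩
  intro A hA x r hr
  set F : Set (E n) := A \ closedBall x r with hF
  set K : ℝ≥0∞ := ENNReal.ofReal ((2:ℝ)^(2*n) / r ^ m) with hK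
  have hKpos : 0 < K := by
    rw [hK]
    apply ENNReal.ofReal_pos.2
    positivity
  have hKne : K ≠ ⊤ := ENNReal.ofReal_ne_top
  have hsm : (0:ℝ) < s - m := by linarith
  -- trivial case
  rcases eq_or_ne (μH[s] F) ⊤ with htop | hfin
  · rw [htop, ENNReal.mul_top (ne_of_gt hKpos)]
    exact le_top
  -- main case: μH[s] F < ⊤
  -- reduce to ε-approximation
  have main : ∀ ε : ℝ≥0∞, 0 < ε → ε ≠ ⊤ →
      ∫⁻ P in grass n m, μH[s - m] (F ∩ {y : E n | y - x ∈ (LinearMap.range (P : E n →ₗ[ℝ] E n))ᗮ}) ∂ν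
        ≤ K * (μH[s] F + ε) := by
    intro ε hε hεne
    -- choose covers at scales δ k
    set δ : ℕ → ℝ≥0∞ := fun k => ((k+1 : ℕ) : ℝ≥0∞)⁻¹ with hδ
    have hδpos : ∀ k, 0 < δ k := by
      intro k
      rw [hδ]
      simp [ENNReal.inv_pos]
    have hδle : ∀ k, δ k ≤ 1 := by
      intro k
      rw [hδ]
      apply ENNReal.inv_le_one.2
      exact_mod_cast Nat.one_le_iff_ne_zero.2 (Nat.succ_ne_zero k)
    have hδ0 : Tendsto δ atTop (𝓝 0) := by
      rw [hδ]
      exact ENNReal.tendsto_inv_nat_nhds_zero.comp (tendsto_add_atTop_nat 1)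
    have hcover : ∀ k : ℕ, ∃ t : ℕ → Set (E n), (F ⊆ ⋃ i, t i) ∧
        (∀ i, EMetric.diam (t i) ≤ δ k) ∧
        (∑' i, ⨆ _ : (t i).Nonempty, EMetric.diam (t i) ^ s) ≤ μH[s] F + ε := by
      intro k
      have hle : (⨅ (t : ℕ → Set (E n)) (_ : F ⊆ ⋃ i, t i)
          (_ : ∀ i, EMetric.diam (t i) ≤ δ k),
          ∑' i, ⨆ _ : (t i).Nonempty, EMetric.diam (t i) ^ s) ≤ μH[s] F := by
        rw [MeasureTheory.Measure.hausdorffMeasure_apply]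
        exact le_iSup₂ (f := fun (ρ : ℝ≥0∞) (_ : 0 < ρ) =>
          ⨅ (t : ℕ → Set (E n)) (_ : F ⊆ ⋃ i, t i) (_ : ∀ i, EMetric.diam (t i) ≤ ρ),
          ∑' i, ⨆ _ : (t i).Nonempty, EMetric.diam (t i) ^ s) (δ k) (hδpos k)
      have hlt : (⨅ (t : ℕ → Set (E n)) (_ : F ⊆ ⋃ i, t i)
          (_ : ∀ i, EMetric.diam (t i) ≤ δ k),
          ∑' i, ⨆ _ : (t i).Nonempty, EMetric.diam (t i) ^ s) < μH[s] F + ε :=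
        lt_of_le_of_lt hle (ENNReal.lt_add_right hfin (ne_of_gt hε))
      rw [iInf_lt_iff] at hlt
      obtain ⟨t, hlt⟩ := hlt
      rw [iInf_lt_iff] at hlt
      obtain ⟨h1, hlt⟩ := hlt
      rw [iInf_lt_iff] at hlt
      obtain ⟨h2, hlt⟩ := hlt
      exact ⟨t, h1, h2, le_of_lt hlt⟩
    choose t ht1 ht2 ht3 using hcover
    -- data for each k, i
    set pt : ℕ → ℕ → E n := fun k i =>
      if h : (t k i ∩ F).Nonempty then h.choose else x with hpt
    set dR : ℕ → ℕ → ℝ := fun k i => (EMetric.diam (t k i ∩ F)).toReal with hdR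
    set M : ℕ → ℕ → Set (E n →L[ℝ] E n) := fun k i =>
      if (t k i ∩ F).Nonempty then {P | ‖P (pt k i - x)‖ ≤ dR k i} else ∅ with hM
    have hMmeas : ∀ k i, MeasurableSet (M k i) := by
      intro k i
      by_cases hne : (t k i ∩ F).Nonempty
      · simp only [hM, if_pos hne]
        exact measurableSet_tube n _ _
      · simp only [hM, if_neg hne]
        exact MeasurableSet.empty
    have hdiam_ne : ∀ k i, EMetric.diam (t k i ∩ F) ≠ ⊤ := by
      intro k i
      exact ne_top_of_le_ne_top (by
          exact ne_top_of_le_ne_top ENNReal.one_ne_top (hδle k)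
        ) (le_trans (EMetric.diam_mono inter_subset_left) (ht2 k i))
    have hpt_mem : ∀ k i, (t k i ∩ F).Nonempty → pt k i ∈ t k i ∩ F := by
      intro k i h
      simp only [hpt, dif_pos h]
      exact h.choose_spec
    -- the dominating functions
    set h : ℕ → (E n →L[ℝ] E n) → ℝ≥0∞ := fun k P =>
      ∑' i, Set.indicator (M k i) (fun _ => EMetric.diam (t k i ∩ F) ^ (s - (m:ℝ))) P with hh
    have hhmeas : ∀ k, Measurable (h k) := by
      intro k
      simp only [hh]
      exact Measurable.ennreal_tsum fun i =>
        Measurable.indicator measurable_const (hMmeas k i)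
    -- pointwise bound for P in grass
    have hpoint : ∀ P ∈ grass n m,
        μH[s - m] (F ∩ {y : E n | y - x ∈ (LinearMap.range (P : E n →ₗ[ℝ] E n))ᗮ}) ≤
          liminf (fun k => h k P) atTop := by
      rintro P ⟨V, hiso, hrank, rfl⟩
      set Pl : Set (E n) := {y : E n | y - x ∈ (LinearMap.range (projCLM n V : E n →ₗ[ℝ] E n))ᗮ} with hPl
      set u : ℕ → ℕ → Set (E n) := fun k i =>
        if projCLM n V ∈ M k i then t k i ∩ F else ∅ with hu
      have hptP : ∀ k i, ∀ y ∈ t k i ∩ F ∩ Pl, projCLM n V ∈ M k i := by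
        intro k i y hy
        have hne : (t k i ∩ F).Nonempty := ⟨y, hy.1⟩
        have hpm := hpt_mem k i hne
        have hy2 : y - x ∈ Vᗮ := by
          have := hy.2
          rwa [hPl, mem_setOf_eq, range_projCLM] at this
        have hPy : projCLM n V (y - x) = 0 := projCLM_eq_zero hy2
        have heq : projCLM n V (pt k i - x) = projCLM n V (pt k i - y) := by
          have : pt k i - x = (pt k i - y) + (y - x) := by abel
          rw [this, map_add, hPy, add_zero]
        simp only [hM, if_pos hne, mem_setOf_eq]
        rw [heq]
        calc ‖projCLM n V (pt k i - y)‖ ≤ ‖pt k i - y‖ := norm_projCLM_le n V _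
          _ ≤ dR k i := by
              rw [hdR, ← dist_eq_norm, dist_edist]
              exact ENNReal.toReal_mono (hdiam_ne k i)
                (EMetric.edist_le_diam_of_mem hpm hy.1)
      have hudiam : ∀ k i, EMetric.diam (u k i) ≤ δ k := by
        intro k i
        by_cases hmem : projCLM n V ∈ M k i
        · simp only [hu, if_pos hmem]
          exact le_trans (EMetric.diam_mono inter_subset_left) (ht2 k i)
        · simp only [hu, if_neg hmem]
          exact (le_of_eq EMetric.diam_empty).trans zero_le
      have hucover : ∀ k, F ∩ Pl ⊆ ⋃ i, u k i := by
        intro k y hy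
        obtain ⟨i, hi⟩ := mem_iUnion.1 (ht1 k hy.1)
        have hyin : y ∈ t k i ∩ F ∩ Pl := ⟨⟨hi, hy.1⟩, hy.2⟩
        have := hptP k i y hyin
        exact mem_iUnion.2 ⟨i, by simp only [hu, if_pos this]; exact ⟨hi, hy.1⟩⟩
      have hH := MeasureTheory.Measure.hausdorffMeasure_le_liminf_tsum (s - (m:ℝ)) (F ∩ Pl) δ hδ0 u
        (Eventually.of_forall hudiam) (Eventually.of_forall hucover)
      refine le_trans hH (liminf_le_liminf (Eventually.of_forall fun k => ?_) ?_ ?_)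
      · simp only [hh]
        apply ENNReal.tsum_le_tsum
        intro i
        by_cases hmem : projCLM n V ∈ M k i
        · simp only [hu, if_pos hmem, Set.indicator_of_mem hmem]
          exact le_refl _
        · simp only [hu, if_neg hmem, Set.indicator_of_notMem hmem]
          rw [EMetric.diam_empty, ENNReal.zero_rpow_of_pos hsm]
      · isBoundedDefault
      · isBoundedDefault
    -- integral bound for h k
    have hint : ∀ k, ∫⁻ P in grass n m, h k P ∂ν ≤ K * (μH[s] F + ε) := by
      intro k
      simp only [hh]
      rw [lintegral_tsum (fun i => (Measurable.indicator measurable_const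
        (hMmeas k i)).aemeasurable)]
      have hterm : ∀ i, ∫⁻ P in grass n m,
          Set.indicator (M k i) (fun _ => EMetric.diam (t k i ∩ F) ^ (s - (m:ℝ))) P ∂ν
          ≤ K * ⨆ _ : (t k i).Nonempty, EMetric.diam (t k i) ^ s := by
        intro i
        rw [lintegral_indicator_const (hMmeas k i)]
        by_cases hne : (t k i ∩ F).Nonempty
        · -- nonempty case
          have hzne : pt k i - x ≠ 0 := by
            have hpm := (hpt_mem k i hne).2
            rw [hF] at hpm
            have : r < dist (pt k i) x := by
              by_contra hcon
              exact hpm.2 (mem_closedBall.2 (le_of_not_gt hcon))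
            intro hcon
            rw [sub_eq_zero] at hcon
            rw [hcon, dist_self] at this
            linarith
          have hnz : r < ‖pt k i - x‖ := by
            have hpm := (hpt_mem k i hne).2
            rw [hF] at hpm
            have : r < dist (pt k i) x := by
              by_contra hcon
              exact hpm.2 (mem_closedBall.2 (le_of_not_gt hcon))
            rwa [dist_eq_norm] at this
          have hdR0 : 0 ≤ dR k i := ENNReal.toReal_nonneg
          set tt : ℝ := dR k i / ‖pt k i - x‖ with htt
          have htt0 : 0 ≤ tt := div_nonneg hdR0 (norm_nonneg _)
          have hMeq : M k i = {P : E n →L[ℝ] E n | ‖P (pt k i - x)‖ ≤ tt * ‖pt k i - x‖} := by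
            simp only [hM, if_pos hne, htt,
              div_mul_cancel₀ _ (norm_ne_zero_iff.2 hzne)]
          have hsb : ν (M k i) ≤ ENNReal.ofReal ((2:ℝ)^(2*n) * tt^m) := by
            rw [hMeq]
            exact small_ball hn hm hν hzne htt0
          have httle : tt ≤ dR k i / r := by
            rw [htt]
            exact div_le_div_of_nonneg_left hdR0 hr (le_of_lt hnz)
          have hν2 : ν (M k i) ≤ ENNReal.ofReal ((2:ℝ)^(2*n) * (dR k i / r)^m) := by
            refine le_trans hsb (ENNReal.ofReal_le_ofReal ?_)
            have hpw : tt^m ≤ (dR k i / r)^m := pow_le_pow_left₀ htt0 httle m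
            have h2n : (0:ℝ) ≤ (2:ℝ)^(2*n) := by positivity
            nlinarith
          have hrest : (ν.restrict (grass n m)) (M k i) ≤ ν (M k i) :=
            Measure.le_iff'.1 Measure.restrict_le_self _
          have e2 : ENNReal.ofReal (dR k i) = EMetric.diam (t k i ∩ F) := by
            rw [hdR]
            exact ENNReal.ofReal_toReal (hdiam_ne k i)
          have e1 : ENNReal.ofReal ((2:ℝ)^(2*n) * (dR k i / r)^m)
              = K * (EMetric.diam (t k i ∩ F)) ^ (m:ℕ) := by
            rw [← e2, ← ENNReal.ofReal_pow hdR0, hK, ← ENNReal.ofReal_mul (by positivity)]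
            congr 1
            rw [div_pow]
            field_simp
          have e3 : (EMetric.diam (t k i ∩ F)) ^ (s - (m:ℝ)) *
              (EMetric.diam (t k i ∩ F)) ^ ((m:ℕ):ℝ) = (EMetric.diam (t k i ∩ F)) ^ s := by
            rw [← ENNReal.rpow_add_of_nonneg (s - (m:ℝ)) ((m:ℕ):ℝ) (le_of_lt hsm)
              (by positivity)]
            norm_num
          have hfinal : (EMetric.diam (t k i ∩ F)) ^ s ≤
              ⨆ _ : (t k i).Nonempty, EMetric.diam (t k i) ^ s := by
            have hne' : (t k i).Nonempty := hne.mono inter_subset_left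
            rw [iSup_pos hne']
            exact ENNReal.rpow_le_rpow (EMetric.diam_mono inter_subset_left)
              (le_of_lt (lt_of_le_of_lt (Nat.cast_nonneg m) hs1))
          calc (EMetric.diam (t k i ∩ F)) ^ (s - (m:ℝ)) * (ν.restrict (grass n m)) (M k i)
              ≤ (EMetric.diam (t k i ∩ F)) ^ (s - (m:ℝ)) *
                (K * (EMetric.diam (t k i ∩ F)) ^ (m:ℕ)) := by
                apply mul_le_mul_right
                rw [← e1]
                exact le_trans hrest hν2
            _ = K * ((EMetric.diam (t k i ∩ F)) ^ (s - (m:ℝ)) *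
                (EMetric.diam (t k i ∩ F)) ^ ((m:ℕ):ℝ)) := by
                rw [ENNReal.rpow_natCast]
                ring
            _ = K * (EMetric.diam (t k i ∩ F)) ^ s := by rw [e3]
            _ ≤ K * ⨆ _ : (t k i).Nonempty, EMetric.diam (t k i) ^ s :=
                mul_le_mul_right hfinal K
        · simp only [hM, if_neg hne, measure_empty, mul_zero]
          exact zero_le
      calc ∑' i, ∫⁻ P in grass n m,
            Set.indicator (M k i) (fun _ => EMetric.diam (t k i ∩ F) ^ (s - (m:ℝ))) P ∂ν
          ≤ ∑' i, K * ⨆ _ : (t k i).Nonempty, EMetric.diam (t k i) ^ s :=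
            ENNReal.tsum_le_tsum hterm
        _ = K * ∑' i, ⨆ _ : (t k i).Nonempty, EMetric.diam (t k i) ^ s :=
            (ENNReal.tsum_mul_left).symm ▸ rfl
        _ ≤ K * (μH[s] F + ε) := mul_le_mul_right (ht3 k) K
    -- combine
    calc ∫⁻ P in grass n m, μH[s - m] (F ∩ {y : E n | y - x ∈ (LinearMap.range (P : E n →ₗ[ℝ] E n))ᗮ}) ∂ν
        ≤ ∫⁻ P in grass n m, liminf (fun k => h k P) atTop ∂ν := by
          apply lintegral_mono_ae
          rw [ae_restrict_iff' (measurableSet_grass n m)]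
          exact ae_of_all _ hpoint
      _ ≤ liminf (fun k => ∫⁻ P in grass n m, h k P ∂ν) atTop :=
          lintegral_liminf_le fun k => hhmeas k
      _ ≤ liminf (fun _ : ℕ => K * (μH[s] F + ε)) atTop :=
          liminf_le_liminf (Eventually.of_forall hint) (by isBoundedDefault)
            (by isBoundedDefault)
      _ = K * (μH[s] F + ε) := liminf_const _
  -- let ε → 0
  refine ENNReal.le_of_forall_pos_le_add fun η hη hlt => ?_
  have hKnz : K ≠ 0 := ne_of_gt hKpos
  have hεpos : (0:ℝ≥0∞) < (η : ℝ≥0∞) / K :=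
    ENNReal.div_pos (ENNReal.coe_ne_zero.2 (ne_of_gt hη)) hKne
  have hεne : (η : ℝ≥0∞) / K ≠ ⊤ :=
    (ENNReal.div_lt_top (by simp) hKnz).ne
  calc ∫⁻ P in grass n m, μH[s - m] (F ∩ {y : E n | y - x ∈ (LinearMap.range (P : E n →ₗ[ℝ] E n))ᗮ}) ∂ν
      ≤ K * (μH[s] F + (η : ℝ≥0∞) / K) := main _ hεpos hεne
    _ = K * μH[s] F + K * ((η : ℝ≥0∞) / K) := by rw [mul_add]
    _ ≤ K * μH[s] F + η := by
        apply add_le_add_right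
        rw [ENNReal.mul_div_cancel hKnz hKne]
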